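/- Let 𝔽_q be a finite field, χ : 𝔽_q → ℂ a nontrivial additive character, P ∈ 𝔽_q[x₁,x₂,x₃] a nonzero homogeneous polynomial of degree k ≥ 1, and H = {x ∈ 𝔽_q³ : P(x) = 0}. If H contains no plane through the origin, then for every m ∈ 𝔽_q³ ∖ {0} one has |Σ_{x∈H} χ(−m·x)| ≤ k·q²/(q − 1); in particular |Ĥ(m)| ≤ k·q²/(q³(q−1)) ≲ q^{−2}. -/

import Mathlib

open Finset MvPolynomial

section aux
variable {F : Type} [Field F] [Fintype F] [DecidableEq F]

lemma card_roots_le' {p : Polynomial F} (hp : p ≠ 0) :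
    (Finset.univ.filter fun y : F => Polynomial.eval y p = 0).card ≤ p.natDegree := by
  calc (Finset.univ.filter fun y : F => Polynomial.eval y p = 0).card
      ≤ p.roots.toFinset.card := Finset.card_le_card (by
        intro y hy
        simp only [Finset.mem_filter] at hy
        simp [Multiset.mem_toFinset, Polynomial.mem_roots hp, Polynomial.IsRoot, hy.2])
    _ ≤ Multiset.card p.roots := p.roots.toFinset_card_le
    _ ≤ p.natDegree := p.card_roots'

lemma sz : ∀ (n : ℕ) (P : MvPolynomial (Fin n) F), P ≠ 0 →
    (Finset.univ.filter fun x : Fin n → F => MvPolynomial.eval x P = 0).card * Fintype.card F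
      ≤ P.totalDegree * (Fintype.card F) ^ n := by
  intro n
  induction n with
  | zero =>
    intro P hP
    obtain ⟨c, rfl⟩ := MvPolynomial.C_surjective (Fin 0) P
    have hc : c ≠ 0 := fun h => hP (by rw [h, map_zero])
    have he : (Finset.univ.filter fun x : Fin 0 → F => MvPolynomial.eval x (C c) = 0) = ∅ := by
      apply Finset.filter_false_of_mem
      intro x _
      simpa using hc
    rw [he]
    simp
  | succ n ih =>
    intro P hP
    set q := Fintype.card F with hqdef
    set f := MvPolynomial.finSuccEquiv F n P with hfdef
    have hf0 : f ≠ 0 := by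
      intro h
      exact hP ((map_eq_zero_iff _ (MvPolynomial.finSuccEquiv F n).injective).mp h)
    set j := f.natDegree with hjdef
    have hA0 : f.coeff j ≠ 0 := by
      exact Polynomial.leadingCoeff_ne_zero.mpr hf0
    -- card identity
    have hcard : (Finset.univ.filter fun x : Fin (n+1) → F => eval x P = 0).card
        = ∑ s : Fin n → F, (Finset.univ.filter fun y : F =>
            Polynomial.eval y (Polynomial.map (MvPolynomial.eval s) f) = 0).card := by
      rw [Finset.card_filter]
      rw [← (Fin.consEquiv (fun _ : Fin (n+1) => F)).sum_comp]
      rw [Fintype.sum_prod_type]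
      rw [Finset.sum_comm]
      apply Finset.sum_congr rfl
      intro s _
      rw [Finset.card_filter]
      apply Finset.sum_congr rfl
      intro y _
      congr 1
      rw [show (Fin.consEquiv (fun _ : Fin (n+1) => F)) (y, s) = Fin.cons y s from rfl]
      rw [MvPolynomial.eval_eq_eval_mv_eval']
    have key : ∀ s : Fin n → F,
        (Finset.univ.filter fun y : F =>
          Polynomial.eval y (Polynomial.map (MvPolynomial.eval s) f) = 0).card
          ≤ if MvPolynomial.eval s (f.coeff j) = 0 then q else j := by
      intro s
      split_ifs with h
      · exact le_trans (Finset.card_filter_le _ _) (by simp [hqdef])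
      · have hmap : Polynomial.map (MvPolynomial.eval s) f ≠ 0 := by
          intro hc
          apply h
          have := congrArg (fun p => Polynomial.coeff p j) hc
          simpa [Polynomial.coeff_map] using this
        exact le_trans (card_roots_le' hmap) Polynomial.natDegree_map_le
    have hsum : (Finset.univ.filter fun x : Fin (n+1) → F => eval x P = 0).card
        ≤ (Finset.univ.filter fun s : Fin n → F =>
            MvPolynomial.eval s (f.coeff j) = 0).card * q + q ^ n * j := by
      rw [hcard]
      calc ∑ s : Fin n → F, (Finset.univ.filter fun y : F =>
            Polynomial.eval y (Polynomial.map (MvPolynomial.eval s) f) = 0).card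
          ≤ ∑ s : Fin n → F, (if MvPolynomial.eval s (f.coeff j) = 0 then q else j) :=
            Finset.sum_le_sum fun s _ => key s
        _ ≤ (Finset.univ.filter fun s : Fin n → F =>
            MvPolynomial.eval s (f.coeff j) = 0).card * q + q ^ n * j := by
            rw [Finset.sum_ite]
            simp only [Finset.sum_const, smul_eq_mul]
            have hfil : (Finset.univ.filter fun s : Fin n → F =>
                ¬ MvPolynomial.eval s (f.coeff j) = 0).card ≤ q ^ n := by
              refine le_trans (Finset.card_le_univ _) ?_
              simp [hqdef]
            exact Nat.add_le_add_left (Nat.mul_le_mul_right j hfil) _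
    have hih := ih (f.coeff j) hA0
    have hdeg : (f.coeff j).totalDegree + j ≤ P.totalDegree :=
      MvPolynomial.totalDegree_coeff_finSuccEquiv_add_le P j hA0
    calc (Finset.univ.filter fun x : Fin (n+1) → F => eval x P = 0).card * q
        ≤ ((Finset.univ.filter fun s : Fin n → F =>
            MvPolynomial.eval s (f.coeff j) = 0).card * q + q ^ n * j) * q :=
          Nat.mul_le_mul_right q hsum
      _ = (Finset.univ.filter fun s : Fin n → F =>
            MvPolynomial.eval s (f.coeff j) = 0).card * q * q + j * q ^ (n+1) := by ring
      _ ≤ (f.coeff j).totalDegree * q ^ n * q + j * q ^ (n+1) := by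
          gcongr
      _ = ((f.coeff j).totalDegree + j) * q ^ (n+1) := by ring
      _ ≤ P.totalDegree * q ^ (n+1) := Nat.mul_le_mul_right _ hdeg

lemma eval_mul_scale {k : ℕ} {d : ℕ} {P : MvPolynomial (Fin d) F} (hhom : P.IsHomogeneous k)
    (t : F) (x : Fin d → F) :
    MvPolynomial.eval (fun i => t * x i) P = t ^ k * MvPolynomial.eval x P := by
  rw [MvPolynomial.eval_eq', MvPolynomial.eval_eq', Finset.mul_sum]
  apply Finset.sum_congr rfl
  intro dd hd
  have hw := hhom (MvPolynomial.mem_support_iff.mp hd)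
  have hdk : ∑ i, dd i = k := by
    rw [← hw]
    rw [Finsupp.weight_apply]
    rw [Finsupp.sum_fintype _ _ (by simp)]
    simp
  calc MvPolynomial.coeff dd P * ∏ i, (t * x i) ^ dd i
      = MvPolynomial.coeff dd P * ((∏ i, t ^ dd i) * ∏ i, x i ^ dd i) := by
        rw [← Finset.prod_mul_distrib]
        simp [mul_pow]
    _ = t ^ k * (MvPolynomial.coeff dd P * ∏ i, x i ^ dd i) := by
        rw [Finset.prod_pow_eq_pow_sum, hdk]
        ring

end aux


set_option maxHeartbeats 1000000 in
/-- For a nonzero homogeneous polynomial `P` of degree `k ≥ 1` in three variables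
over `𝔽_q`, with `H = {P = 0}` containing no plane through the origin, for every `m ≠ 0` one has
`|Σ_{x∈H} χ(−m·x)| ≤ k·q²/(q − 1)`; in particular `|Ĥ(m)| ≤ k·q²/(q³(q−1)) ≲ q^{−2}`. -/
theorem stmt_2 {F : Type} [Field F] [Fintype F] [DecidableEq F]
    (χ : AddChar F ℂ) (hχ : χ ≠ 1)
    (k : ℕ) (hk : 1 ≤ k)
    (P : MvPolynomial (Fin 3) F) (hP : P ≠ 0) (hhom : P.IsHomogeneous k)
    (H : Finset (Fin 3 → F)) (hH : ∀ x, x ∈ H ↔ MvPolynomial.eval x P = 0)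
    (hplane : ¬ ∃ m : Fin 3 → F, m ≠ 0 ∧
        (Finset.univ.filter (fun x : Fin 3 → F => ∑ i, m i * x i = 0)) ⊆ H) :
    ∀ m : Fin 3 → F, m ≠ 0 →
      ‖∑ x ∈ H, χ (-(∑ i, m i * x i))‖
          ≤ (k : ℝ) * (Fintype.card F : ℝ) ^ 2 / ((Fintype.card F : ℝ) - 1)
      ∧ ‖((Fintype.card F : ℂ))⁻¹ ^ 3 * ∑ x ∈ H, χ (-(∑ i, m i * x i))‖
          ≤ (k : ℝ) * (Fintype.card F : ℝ) ^ 2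
              / ((Fintype.card F : ℝ) ^ 3 * ((Fintype.card F : ℝ) - 1)) := by
  intro m hm
  classical
  set q : ℕ := Fintype.card F with hqdef
  have hq2 : 1 < q := Fintype.one_lt_card
  -- |H| * q ≤ k * q^3
  have hHfilter : H = Finset.univ.filter fun x : Fin 3 → F => MvPolynomial.eval x P = 0 := by
    ext x; simp [hH x]
  have hHcard : H.card * q ≤ k * q ^ 3 := by
    rw [hHfilter]
    have := sz 3 P hP
    rwa [hhom.totalDegree hP] at this
  -- |H ∩ plane| * q ≤ k * q^2

  have hPlaneCard : (H.filter fun x => ∑ i, m i * x i = 0).card * q ≤ k * q ^ 2 := by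
    obtain ⟨jj, hmj⟩ : ∃ jj, m jj ≠ 0 := by
      by_contra hcon
      push_neg at hcon
      exact hm (funext fun i => hcon i)
    set A2 : MvPolynomial (Fin 2) F := MvPolynomial.C (-(m jj)⁻¹) *
        ∑ l : Fin 2, MvPolynomial.C (m (jj.succAbove l)) * MvPolynomial.X l with hA2
    set sb : Fin 3 → MvPolynomial (Fin 2) F :=
        jj.insertNth A2 (fun l => MvPolynomial.X l) with hsb
    set Q : MvPolynomial (Fin 2) F := MvPolynomial.bind₁ sb P with hQdef2
    have hsb_hom : ∀ i, (sb i).IsHomogeneous 1 := by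
      intro i
      refine Fin.succAboveCases jj ?_ ?_ i
      · rw [hsb, Fin.insertNth_apply_same]
        exact (MvPolynomial.IsHomogeneous.sum _ _ _
          (fun l _ => (MvPolynomial.isHomogeneous_X _ _).C_mul _)).C_mul _
      · intro l
        rw [hsb, Fin.insertNth_apply_succAbove]
        exact MvPolynomial.isHomogeneous_X _ _
    have hQhom : Q.IsHomogeneous k := by
      rw [hQdef2, ← MvPolynomial.aeval_eq_bind₁]
      simpa using hhom.aeval sb hsb_hom
    have hA2val : ∀ y : Fin 2 → F,
        MvPolynomial.eval y A2 = -(m jj)⁻¹ * ∑ l, m (jj.succAbove l) * y l := by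
      intro y
      rw [hA2]
      simp
    have heval : ∀ y : Fin 2 → F, MvPolynomial.eval y Q
        = MvPolynomial.eval (jj.insertNth (MvPolynomial.eval y A2) y) P := by
      intro y
      rw [hQdef2]
      have h1 : MvPolynomial.eval y (MvPolynomial.bind₁ sb P)
          = MvPolynomial.eval (fun i => MvPolynomial.eval y (sb i)) P :=
        MvPolynomial.eval₂Hom_bind₁ (RingHom.id F) y sb P
      have h2 : ∀ i, MvPolynomial.eval y (sb i)
          = Fin.insertNth (α := fun _ => F) jj (MvPolynomial.eval y A2) y i := by
        intro i
        refine Fin.succAboveCases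
          (α := fun i => MvPolynomial.eval y (sb i)
            = Fin.insertNth (α := fun _ => F) jj (MvPolynomial.eval y A2) y i)
          jj ?_ ?_ i
        · simp only [hsb, Fin.insertNth_apply_same]
        · intro l
          simp only [hsb, Fin.insertNth_apply_succAbove]
          simp
      rw [h1]
      exact congrArg (fun v => MvPolynomial.eval v P) (funext h2)
    have hmdot : ∀ y : Fin 2 → F,
        ∑ i, m i * (jj.insertNth (MvPolynomial.eval y A2) y : Fin 3 → F) i = 0 := by
      intro y
      rw [Fin.sum_univ_succAbove
        (fun i => m i * (jj.insertNth (MvPolynomial.eval y A2) y : Fin 3 → F) i) jj]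
      simp only [Fin.insertNth_apply_same, Fin.insertNth_apply_succAbove]
      rw [hA2val y]
      field_simp
      ring
    have hptx : ∀ x : Fin 3 → F, (∑ i, m i * x i = 0) →
        jj.insertNth (MvPolynomial.eval (fun l => x (jj.succAbove l)) A2)
          (fun l => x (jj.succAbove l)) = x := by
      intro x hx
      rw [Fin.sum_univ_succAbove (fun i => m i * x i) jj] at hx
      have hsum : ∑ l, m (jj.succAbove l) * x (jj.succAbove l) = -(m jj * x jj) := by
        linear_combination hx
      have hval : MvPolynomial.eval (fun l => x (jj.succAbove l)) A2 = x jj := by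
        rw [hA2val, hsum]
        field_simp
      rw [hval]
      exact Fin.insertNth_self_removeNth jj x
    have hQ0 : Q ≠ 0 := by
      intro h0
      apply hplane
      refine ⟨m, hm, ?_⟩
      intro x hx
      rw [Finset.mem_filter] at hx
      rw [hH]
      have h2 := heval (fun l => x (jj.succAbove l))
      rw [h0, map_zero, hptx x hx.2] at h2
      exact h2.symm
    have hbij : (H.filter fun x => ∑ i, m i * x i = 0).card
        = (Finset.univ.filter fun y : Fin 2 → F => MvPolynomial.eval y Q = 0).card := by
      refine Finset.card_bij' (fun x _ => fun l => x (jj.succAbove l))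
        (fun y _ => jj.insertNth (MvPolynomial.eval y A2) y) ?_ ?_ ?_ ?_
      · intro x hx
        obtain ⟨hx1, hx2⟩ := Finset.mem_filter.mp hx
        refine Finset.mem_filter.mpr ⟨Finset.mem_univ _, ?_⟩
        rw [heval, hptx x hx2]
        exact (hH x).mp hx1
      · intro y hy
        obtain ⟨-, hy2⟩ := Finset.mem_filter.mp hy
        refine Finset.mem_filter.mpr ⟨(hH _).mpr ?_, hmdot y⟩
        rw [← heval]
        exact hy2
      · intro x hx
        obtain ⟨-, hx2⟩ := Finset.mem_filter.mp hx
        exact hptx x hx2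
      · intro y hy
        funext l
        simp [Fin.insertNth_apply_succAbove]
    rw [hbij]
    calc (Finset.univ.filter fun y : Fin 2 → F => MvPolynomial.eval y Q = 0).card * q
        ≤ Q.totalDegree * q ^ 2 := sz 2 Q hQ0
      _ ≤ k * q ^ 2 := Nat.mul_le_mul_right _ hQhom.totalDegree_le
  -- character sum identity
  set S : ℂ := ∑ x ∈ H, χ (-(∑ i, m i * x i)) with hSdef

  have hprim : χ.IsPrimitive := AddChar.IsPrimitive.of_ne_one hχ
  have hmemH : ∀ (t : F) (x : Fin 3 → F), x ∈ H → (fun i => t * x i) ∈ H := by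
    intro t x hx
    rw [hH] at hx ⊢
    rw [eval_mul_scale hhom, hx, mul_zero]
  have hscale : ∀ t : F, t ≠ 0 →
      (∑ x ∈ H, χ (t * -(∑ i, m i * x i))) = S := by
    intro t ht
    rw [hSdef]
    refine Finset.sum_nbij' (i := fun x => fun i => t * x i) (j := fun x => fun i => t⁻¹ * x i)
      (fun x hx => hmemH t x hx) (fun x hx => hmemH t⁻¹ x hx) ?_ ?_ ?_
    · intro x _
      funext i
      exact inv_mul_cancel_left₀ ht (x i)
    · intro x _
      funext i
      exact mul_inv_cancel_left₀ ht (x i)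
    · intro x _
      congr 1
      have h3 : ∑ i, m i * (t * x i) = t * ∑ i, m i * x i := by
        rw [Finset.mul_sum]
        exact Finset.sum_congr rfl fun i _ => by ring
      rw [h3]
      ring
  have hkey : ((q : ℂ) - 1) * S
      = (q : ℂ) * ((H.filter fun x => ∑ i, m i * x i = 0).card : ℂ) - (H.card : ℂ) := by
    have hfe : (Finset.univ.filter fun t : F => t ≠ 0) = Finset.univ.erase 0 := by
      ext t
      simp [Finset.mem_erase, and_comm]
    have hfc : (Finset.univ.filter fun t : F => t ≠ 0).card = q - 1 := by
      rw [hfe, Finset.card_erase_of_mem (Finset.mem_univ _), Finset.card_univ]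
    have hT1 : ∑ t ∈ Finset.univ.filter (fun t : F => t ≠ 0),
        ∑ x ∈ H, χ (t * -(∑ i, m i * x i)) = ((q - 1 : ℕ) : ℂ) * S := by
      rw [Finset.sum_congr rfl (fun t ht => hscale t (Finset.mem_filter.mp ht).2)]
      rw [Finset.sum_const, hfc, nsmul_eq_mul]
    have hT2 : ∑ t ∈ Finset.univ.filter (fun t : F => t ≠ 0),
        ∑ x ∈ H, χ (t * -(∑ i, m i * x i))
        = (q : ℂ) * ((H.filter fun x => ∑ i, m i * x i = 0).card : ℂ) - (H.card : ℂ) := by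
      rw [hfe, Finset.sum_erase_eq_sub (Finset.mem_univ 0)]
      have hzero : ∑ x ∈ H, χ ((0:F) * -(∑ i, m i * x i)) = (H.card : ℂ) := by
        simp
      rw [hzero, Finset.sum_comm]
      have hin : ∀ x ∈ H, (∑ t : F, χ (t * -(∑ i, m i * x i)))
          = if (∑ i, m i * x i) = 0 then (q : ℂ) else 0 := by
        intro x _
        rw [AddChar.sum_mulShift _ hprim]
        simp [neg_eq_zero, hqdef]
      rw [Finset.sum_congr rfl hin, Finset.sum_ite, Finset.sum_const, Finset.sum_const_zero]
      simp [mul_comm]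
    rw [← hT1.symm.trans hT2]
    congr 1
    push_cast [Nat.cast_sub (le_of_lt hq2)]
    ring

  set Ac : ℕ := (H.filter fun x => ∑ i, m i * x i = 0).card with hAcdef
  have hqR : (1:ℝ) < (q:ℝ) := by exact_mod_cast hq2
  have hq0 : (0:ℝ) < (q:ℝ) := by linarith
  have hAcR : (Ac:ℝ) * q ≤ k * (q:ℝ) ^ 2 := by exact_mod_cast hPlaneCard
  have hBR : (H.card:ℝ) * q ≤ k * (q:ℝ) ^ 3 := by exact_mod_cast hHcard
  have hB2 : (H.card:ℝ) ≤ k * (q:ℝ) ^ 2 := by nlinarith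
  have hA2b : (q:ℝ) * (Ac:ℝ) ≤ k * (q:ℝ) ^ 2 := by nlinarith
  have hnum : |(q:ℝ) * (Ac:ℝ) - (H.card:ℝ)| ≤ (k:ℝ) * (q:ℝ) ^ 2 := by
    rw [abs_le]
    constructor
    · have h0 : (0:ℝ) ≤ (q:ℝ) * (Ac:ℝ) := by positivity
      nlinarith
    · have h0 : (0:ℝ) ≤ (H.card:ℝ) := by positivity
      nlinarith
  have habsS : ‖S‖ = |(q:ℝ) * (Ac:ℝ) - (H.card:ℝ)| / ((q:ℝ) - 1) := by
    have h1 := congrArg (‖·‖) hkey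
    rw [norm_mul] at h1
    have e1 : ‖(q:ℂ) - 1‖ = (q:ℝ) - 1 := by
      rw [show ((q:ℂ) - 1) = (((q:ℝ) - 1 : ℝ) : ℂ) by push_cast; ring,
        Complex.norm_real, Real.norm_eq_abs, abs_of_pos (by linarith)]
    have e2 : ‖(q:ℂ) * ((Ac:ℕ):ℂ) - ((H.card:ℕ):ℂ)‖
        = |(q:ℝ) * (Ac:ℝ) - (H.card:ℝ)| := by
      rw [show ((q:ℂ) * ((Ac:ℕ):ℂ) - ((H.card:ℕ):ℂ))
          = ((((q:ℝ) * (Ac:ℝ) - (H.card:ℝ)) : ℝ) : ℂ) by push_cast; ring,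
        Complex.norm_real, Real.norm_eq_abs]
    rw [e1, e2] at h1
    rw [eq_div_iff (by linarith : ((q:ℝ) - 1) ≠ 0)]
    linarith [h1]
  have hfirst : ‖S‖ ≤ (k : ℝ) * (q:ℝ) ^ 2 / ((q:ℝ) - 1) := by
    rw [habsS]
    exact div_le_div_of_nonneg_right hnum (by linarith)
  refine ⟨hfirst, ?_⟩
  have e3 : ‖((q:ℂ))⁻¹ ^ 3 * S‖ = ((q:ℝ))⁻¹ ^ 3 * ‖S‖ := by
    rw [norm_mul, norm_pow, norm_inv, Complex.norm_natCast]
  rw [e3]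
  calc ((q:ℝ))⁻¹ ^ 3 * ‖S‖
      ≤ ((q:ℝ))⁻¹ ^ 3 * ((k : ℝ) * (q:ℝ) ^ 2 / ((q:ℝ) - 1)) := by
        apply mul_le_mul_of_nonneg_left hfirst (by positivity)
    _ = (k : ℝ) * (q:ℝ) ^ 2 / ((q:ℝ) ^ 3 * ((q:ℝ) - 1)) := by
        field_simp
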